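/- For every integer n ≥ 5, the n-th Taylor coefficient of A at 0 is strictly smaller than the n-th coefficient of B: Aₙ < Bₙ, where Aₙ := iteratedDeriv n A 0 / n! and Bₙ := ((1/(2n−1))·(1/4ⁿ)·C(2n,n))². -/

import Mathlib

open Real

/-- The function `A(x) = 1 + 3x/(10 + √(4 - 3x))`. -/
noncomputable def Afun (x : ℝ) : ℝ := 1 + 3 * x / (10 + Real.sqrt (4 - 3 * x))

/-- The `n`-th Taylor coefficient of `A` at `0`. -/
noncomputable def Acoef (n : ℕ) : ℝ := iteratedDeriv n Afun 0 / (Nat.factorial n)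

/-- The `n`-th coefficient of the series `B`. -/
noncomputable def Bcoef (n : ℕ) : ℝ :=
  ((1 / (2 * (n : ℝ) - 1)) * (1 / 4 ^ n) * (Nat.choose (2 * n) n)) ^ 2

namespace CoefAux

open Set

noncomputable def c : ℕ → ℝ
  | 0 => 1
  | k + 1 => c k * (3 * (2 * (k : ℝ) - 1) / 2)

noncomputable def e (k : ℕ) : ℝ := -c k / (4 ^ k * Nat.factorial k)

def S : Set ℝ := Ioo (-1 : ℝ) 1

lemma S_open : IsOpen S := isOpen_Ioo
lemma S_mem0 : (0:ℝ) ∈ S := by constructor <;> norm_num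
lemma S_ud : UniqueDiffOn ℝ S := S_open.uniqueDiffOn

lemma hx4 {x : ℝ} (hx : x ∈ S) : 0 < 4 - 3 * x := by
  simp only [S, mem_Ioo] at hx; linarith [hx.2]

lemma itdw (f : ℝ → ℝ) (n : ℕ) {x : ℝ} (hx : x ∈ S) :
    iteratedDerivWithin n f S x = iteratedDeriv n f x := by
  rw [iteratedDerivWithin_eq_iteratedFDerivWithin, iteratedDeriv_eq_iteratedFDeriv,
    iteratedFDerivWithin_of_isOpen n S_open hx]

lemma c_succ (k : ℕ) : c (k+1) = c k * (3 * (2 * (k : ℝ) - 1) / 2) := rfl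

lemma rpow_step (b : ℝ) (k : ℕ) {x : ℝ} (hx : 0 < 4 - 3 * x) :
    HasDerivAt (fun y : ℝ => b * (4 - 3 * y) ^ ((1:ℝ)/2 - k))
      ((b * (3 * (2 * (k:ℝ) - 1) / 2)) * (4 - 3 * x) ^ ((1:ℝ)/2 - ((k:ℝ)+1))) x := by
  have ht : HasDerivAt (fun y : ℝ => 4 - 3 * y) (-3) x := by
    simpa using ((hasDerivAt_id x).const_mul (3:ℝ)).const_sub 4
  have h := (ht.rpow_const (p := (1:ℝ)/2 - k) (Or.inl hx.ne')).const_mul b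
  refine h.congr_deriv ?_
  rw [show ((1:ℝ)/2 - ((k:ℝ)+1)) = ((1:ℝ)/2 - k) - 1 by ring]
  ring

lemma iter_g (k : ℕ) :
    ∀ x ∈ S, iteratedDerivWithin k (fun y => Real.sqrt (4 - 3*y)) S x
      = c k * (4 - 3*x) ^ ((1:ℝ)/2 - (k:ℝ)) := by
  induction k with
  | zero =>
    intro x hx
    rw [iteratedDerivWithin_zero]
    rw [Real.sqrt_eq_rpow]
    norm_num [c]
  | succ k IH =>
    intro x hx
    rw [iteratedDerivWithin_succ]
    have hcong : derivWithin (iteratedDerivWithin k (fun y => Real.sqrt (4 - 3*y)) S) S x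
        = derivWithin (fun y => c k * (4 - 3*y) ^ ((1:ℝ)/2 - (k:ℝ))) S x :=
      derivWithin_congr (fun y hy => IH y hy) (IH x hx)
    rw [hcong, derivWithin_of_isOpen S_open hx, (rpow_step (c k) k (hx4 hx)).deriv]
    push_cast [c]
    ring

lemma inner_cd : ContDiff ℝ ⊤ (fun y : ℝ => 4 - 3 * y) :=
  contDiff_const.sub (contDiff_const.mul contDiff_id)

lemma g_smooth : ContDiffOn ℝ ⊤ (fun y : ℝ => Real.sqrt (4 - 3*y)) S := by
  intro x hx
  exact ((Real.contDiffAt_sqrt (hx4 hx).ne').comp x inner_cd.contDiffAt).contDiffWithinAt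

lemma f2_smooth : ContDiffOn ℝ ⊤ (fun y : ℝ => 11 - Real.sqrt (4 - 3*y)) S :=
  contDiffOn_const.sub g_smooth

lemma A_smooth : ContDiffOn ℝ ⊤ Afun S := by
  intro x hx
  have hden : (10 : ℝ) + Real.sqrt (4 - 3 * x) ≠ 0 := by
    have := Real.sqrt_nonneg (4 - 3*x); positivity
  have h1 : ContDiffAt ℝ ⊤ (fun y : ℝ => 3 * y / (10 + Real.sqrt (4 - 3*y))) x := by
    apply ContDiffAt.div
    · exact (contDiff_const.mul contDiff_id).contDiffAt
    · exact contDiffAt_const.add ((Real.contDiffAt_sqrt (hx4 hx).ne').comp x inner_cd.contDiffAt)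
    · exact hden
  exact (contDiffAt_const.add h1).contDiffWithinAt

lemma iter_mul (f : ℝ → ℝ) (hf : ContDiffOn ℝ ⊤ f S) (a b : ℝ) :
    ∀ n : ℕ, ∀ x ∈ S,
      iteratedDerivWithin (n+1) (fun y => b + (a + y) * f y) S x
        = (a + x) * iteratedDerivWithin (n+1) f S x
          + ((n:ℝ)+1) * iteratedDerivWithin n f S x := by
  have hd : ∀ (k : ℕ) (x : ℝ), x ∈ S →
      HasDerivAt (iteratedDerivWithin k f S) (iteratedDerivWithin (k+1) f S x) x := by
    intro k x hx
    have h1 : DifferentiableAt ℝ (iteratedDerivWithin k f S) x := by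
      refine ((hf.differentiableOn_iteratedDerivWithin ?_ S_ud) x hx).differentiableAt
        (S_open.mem_nhds hx)
      exact lt_of_lt_of_le (WithTop.coe_lt_top _) le_rfl
    have h2 := h1.hasDerivAt
    rwa [← derivWithin_of_isOpen S_open hx, ← iteratedDerivWithin_succ] at h2
  intro n
  induction n with
  | zero =>
    intro x hx
    have hfd : DifferentiableAt ℝ f x := by
      simpa [iteratedDerivWithin_zero] using
        ((hf x hx).contDiffAt (S_open.mem_nhds hx)).differentiableAt (by simp)
    have hF : HasDerivAt (fun y => b + (a + y) * f y)
        (f x + (a + x) * deriv f x) x := by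
      have := (((hasDerivAt_id x).const_add a).mul hfd.hasDerivAt).const_add b
      simpa using this
    rw [iteratedDerivWithin_one, derivWithin_of_isOpen S_open hx, hF.deriv,
      iteratedDerivWithin_one, derivWithin_of_isOpen S_open hx,
      iteratedDerivWithin_zero]
    push_cast; ring
  | succ n IH =>
    intro x hx
    rw [iteratedDerivWithin_succ]
    have hcong : derivWithin (iteratedDerivWithin (n+1) (fun y => b + (a + y) * f y) S) S x
        = derivWithin (fun y => (a + y) * iteratedDerivWithin (n+1) f S y
            + ((n:ℝ)+1) * iteratedDerivWithin n f S y) S x :=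
      derivWithin_congr (fun y hy => IH y hy) (IH x hx)
    have hF : HasDerivAt (fun y => (a + y) * iteratedDerivWithin (n+1) f S y
        + ((n:ℝ)+1) * iteratedDerivWithin n f S y)
        ((iteratedDerivWithin (n+1) f S x + (a + x) * iteratedDerivWithin (n+2) f S x)
          + ((n:ℝ)+1) * iteratedDerivWithin (n+1) f S x) x := by
      have h1 := ((hasDerivAt_id x).const_add a).mul (hd (n+1) x hx)
      have h2 := (hd n x hx).const_mul ((n:ℝ)+1)
      refine (h1.add h2).congr_deriv ?_
      simp only [id, one_mul]
    rw [hcong, derivWithin_of_isOpen S_open hx, hF.deriv]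
    push_cast; ring

lemma funeq : ∀ x ∈ S, (fun y => 0 + (32 + y) * Afun y) x
    = (fun y => 32 + (0 + y) * (11 - Real.sqrt (4 - 3*y))) x := by
  intro x hx
  have h4 := hx4 hx
  have ht : Real.sqrt (4 - 3*x) ^ 2 = 4 - 3*x := Real.sq_sqrt h4.le
  have htn : (0:ℝ) ≤ Real.sqrt (4 - 3*x) := Real.sqrt_nonneg _
  have hden : (10 : ℝ) + Real.sqrt (4 - 3 * x) ≠ 0 := by positivity
  simp only [Afun]
  field_simp
  rw [show (4:ℝ) - x * 3 = 4 - 3 * x by ring]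
  nlinarith [ht, congrArg (· * x) ht]

lemma rpow_val (k : ℕ) : (4:ℝ) ^ ((1:ℝ)/2 - (k:ℝ)) = 2 / 4^k := by
  rw [Real.rpow_sub (by norm_num), Real.rpow_natCast]
  have h2 : (4:ℝ) ^ ((1:ℝ)/2) = 2 := by
    rw [← Real.sqrt_eq_rpow, show (4:ℝ) = 2^2 by norm_num, Real.sqrt_sq (by norm_num)]
  rw [h2]

/-- iterated derivative (≥ 1) of `11 - √(4-3x)` at `0`. -/
lemma iter_f2_zero (k : ℕ) :
    iteratedDerivWithin (k+1) (fun y => 11 - Real.sqrt (4 - 3*y)) S 0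
      = -c (k+1) * (2 / 4^(k+1)) := by
  rw [iteratedDerivWithin_const_sub (Nat.succ_pos k),
    iteratedDerivWithin_fun_neg, iter_g (k+1) 0 S_mem0]
  rw [show (4:ℝ) - 3 * 0 = 4 by norm_num]
  rw [show ((1:ℝ)/2 - ((k:ℕ)+1:ℕ)) = (1:ℝ)/2 - (((k+1):ℕ):ℝ) by push_cast; ring] at *
  rw [rpow_val (k+1)]
  ring

/-- The key recurrence. -/
lemma key (m : ℕ) : 32 * Acoef (m+2) + Acoef (m+1) = 2 * e (m+1) := by
  have hL := iter_mul Afun A_smooth 32 0 (m+1) 0 S_mem0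
  have hR := iter_mul (fun y => 11 - Real.sqrt (4 - 3*y)) f2_smooth 0 32 (m+1) 0 S_mem0
  have hcong := iteratedDerivWithin_congr (f := fun y => 0 + (32 + y) * Afun y)
      (g := fun y => 32 + (0 + y) * (11 - Real.sqrt (4 - 3*y)))
      (n := m+2) funeq S_mem0
  rw [hL, hR] at hcong
  rw [iter_f2_zero m, iter_f2_zero (m+1)] at hcong
  rw [itdw Afun (m+1+1) S_mem0, itdw Afun (m+1) S_mem0] at hcong
  -- hcong : (32+0) * D(m+2) + (m+2) * D(m+1) = (0+0)*(...) + (m+2) * (-c(m+1) * (2/4^(m+1)))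
  have hDm2 : iteratedDeriv (m+2) Afun 0 = (Nat.factorial (m+2)) * Acoef (m+2) := by
    rw [Acoef]; field_simp
  have hDm1 : iteratedDeriv (m+1) Afun 0 = (Nat.factorial (m+1)) * Acoef (m+1) := by
    rw [Acoef]; field_simp
  rw [hDm2, hDm1] at hcong
  have hfact : (Nat.factorial (m+2) : ℝ) = ((m:ℝ)+2) * (Nat.factorial (m+1)) := by
    rw [show m+2 = (m+1)+1 from rfl, Nat.factorial_succ]; push_cast; ring
  rw [hfact] at hcong
  have hfne : (Nat.factorial (m+1) : ℝ) ≠ 0 := by positivity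
  have hmne : ((m:ℝ)+2) ≠ 0 := by positivity
  rw [e]
  have h4 : ((4:ℝ) ^ (m+1)) ≠ 0 := by positivity
  field_simp at hcong ⊢
  have hk : ((m:ℝ)+2) * 4^(m+1+1) ≠ 0 := by positivity
  apply mul_left_cancel₀ hk
  push_cast at hcong ⊢
  linear_combination hcong

lemma sqrt4 : Real.sqrt 4 = 2 := by
  rw [show (4:ℝ) = 2^2 by norm_num, Real.sqrt_sq (by norm_num)]

lemma acoef0 : Acoef 0 = 1 := by
  simp [Acoef, Afun]

lemma acoef1 : Acoef 1 = 1/4 := by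
  have hg : HasDerivAt (fun y : ℝ => Real.sqrt (4 - 3 * y)) (-3/4) 0 := by
    have hi : HasDerivAt (fun y : ℝ => 4 - 3 * y) (-3) 0 := by
      simpa using ((hasDerivAt_id (0:ℝ)).const_mul (3:ℝ)).const_sub 4
    have := (Real.hasDerivAt_sqrt (by norm_num : (4:ℝ) - 3*0 ≠ 0)).comp 0 hi
    refine this.congr_deriv ?_
    · norm_num [sqrt4]
  have hden : HasDerivAt (fun y : ℝ => 10 + Real.sqrt (4 - 3 * y)) (-3/4) 0 :=
    hg.const_add 10
  have hnum : HasDerivAt (fun y : ℝ => 3 * y) 3 0 := by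
    simpa using (hasDerivAt_id (0:ℝ)).const_mul (3:ℝ)
  have hne : (10:ℝ) + Real.sqrt (4 - 3 * 0) ≠ 0 := by norm_num [sqrt4]
  have hA : HasDerivAt Afun (1/4) 0 := by
    have := (hnum.div hden hne).const_add 1
    refine this.congr_deriv ?_
    norm_num [sqrt4]
  simp [Acoef, iteratedDeriv_one, hA.deriv]

lemma c1 : c 1 = -(3/2) := by rw [c_succ]; norm_num [c]
lemma c2 : c 2 = -(9/4) := by rw [c_succ, c1]; norm_num
lemma c3 : c 3 = -(81/8) := by rw [c_succ, c2]; norm_num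
lemma c4 : c 4 = -(1215/16) := by rw [c_succ, c3]; norm_num

lemma e1 : e 1 = 3/8 := by rw [e, c1]; norm_num [Nat.factorial]
lemma e2 : e 2 = 9/128 := by rw [e, c2]; norm_num [Nat.factorial]
lemma e3 : e 3 = 27/1024 := by rw [e, c3]; norm_num [Nat.factorial]
lemma e4 : e 4 = 405/32768 := by rw [e, c4]; norm_num [Nat.factorial]

lemma acoef2 : Acoef 2 = 1/64 := by have := key 0; rw [acoef1, e1] at this; linarith
lemma acoef3 : Acoef 3 = 1/256 := by have := key 1; rw [acoef2, e2] at this; linarith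
lemma acoef4 : Acoef 4 = 25/16384 := by have := key 2; rw [acoef3, e3] at this; linarith

lemma c_neg : ∀ k : ℕ, c (k+1) < 0 := by
  intro k
  induction k with
  | zero => rw [c1]; norm_num
  | succ k IH =>
    rw [c_succ (k+1)]
    apply mul_neg_of_neg_of_pos IH
    have : (0:ℝ) ≤ (k:ℝ) := Nat.cast_nonneg k
    push_cast
    nlinarith

lemma e_pos (k : ℕ) : 0 < e (k+1) := by
  rw [e]
  apply div_pos (by linarith [c_neg k])
  positivity

lemma e_succ (k : ℕ) : e (k+1) = e k * (3 * (2*(k:ℝ) - 1)) / (8 * ((k:ℝ)+1)) := by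
  rw [e, e, c_succ, Nat.factorial_succ]
  have h1 : ((4:ℝ)^k) ≠ 0 := by positivity
  have h2 : ((Nat.factorial k : ℝ)) ≠ 0 := by positivity
  have h3 : ((k:ℝ)+1) ≠ 0 := by positivity
  push_cast
  field_simp
  ring

/-- The sandwich invariant: for n = m+4, bounds on `32 * Acoef n` in terms of `e (n-1)`. -/
lemma sandwich (m : ℕ) :
    (50/27) * e (m+3) ≤ 32 * Acoef (m+4) ∧ 32 * Acoef (m+4) ≤ (623/324) * e (m+3) := by
  induction m with
  | zero =>
    rw [acoef4, e3]; norm_num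
  | succ m IH =>
    obtain ⟨hlo, hhi⟩ := IH
    have hk := key (m+3)
    have he := e_succ (m+3)
    have hep : 0 < e (m+3) := e_pos (m+2)
    have hep4 : 0 < e (m+4) := e_pos (m+3)
    have hm : (0:ℝ) ≤ (m:ℝ) := Nat.cast_nonneg m
    push_cast at he hk ⊢
    have hden : (0:ℝ) < 8 * (((m:ℝ)+3)+1) := by linarith
    -- e (m+4) * (8 * (m+4)) = e (m+3) * (3 * (2*(m+3) - 1))
    have he' : e (m+4) * (8 * ((m:ℝ)+4)) = e (m+3) * (3 * (2*((m:ℝ)+3) - 1)) := by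
      rw [he]; field_simp; ring
    constructor
    · nlinarith [mul_le_mul_of_nonneg_right hhi (le_of_lt (by linarith : (0:ℝ) < (m:ℝ)+4))]
    · nlinarith [mul_le_mul_of_nonneg_right hlo (le_of_lt (by linarith : (0:ℝ) < (m:ℝ)+4))]

lemma B_pos (n : ℕ) (hn : 1 ≤ n) : 0 < Bcoef n := by
  rw [Bcoef]
  have h0 : (1:ℝ) ≤ (n:ℝ) := by exact_mod_cast hn
  have h1 : (0:ℝ) < 2 * (n:ℝ) - 1 := by linarith
  have h2 : (0:ℝ) < (Nat.choose (2*n) n : ℝ) := by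
    exact_mod_cast Nat.choose_pos (by omega)
  have h3 : (0:ℝ) < (4:ℝ)^n := by positivity
  apply pow_pos
  positivity


lemma Bsucc_aux (n : ℕ) (X : ℝ) (h0 : (1:ℝ) ≤ (n:ℝ)) :
    1 / (2 * (n:ℝ) + 1) * (1 / (4 ^ n * 4)) * (2 * (2 * (n:ℝ) + 1) * X / ((n:ℝ) + 1)) =
    1 / (2 * (n:ℝ) - 1) * (1 / 4 ^ n) * X * ((2 * (n:ℝ) - 1) / (2 * (n:ℝ) + 2)) := by
  have hne1 : ((n:ℝ)+1) ≠ 0 := by positivity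
  have hne2 : (2*(n:ℝ)+1) ≠ 0 := by positivity
  have hne3 : (2*(n:ℝ)-1) ≠ 0 := by intro h; nlinarith
  have hne4 : ((4:ℝ)^n) ≠ 0 := by positivity
  have hne5 : (2*(n:ℝ)+2) ≠ 0 := by positivity
  apply mul_left_cancel₀
    (show ((2*(n:ℝ)+1) * (4^n*4) * ((n:ℝ)+1) * ((2*(n:ℝ)-1) * 4^n * (2*(n:ℝ)+2))) ≠ 0 from
      mul_ne_zero (mul_ne_zero (mul_ne_zero hne2 (by positivity)) hne1)
        (mul_ne_zero (mul_ne_zero hne3 hne4) hne5))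
  field_simp
  ring

lemma B_succ (n : ℕ) (hn : 1 ≤ n) :
    Bcoef (n+1) = Bcoef n * ((2*(n:ℝ) - 1) / (2*(n:ℝ) + 2))^2 := by
  have h0 : (1:ℝ) ≤ (n:ℝ) := by exact_mod_cast hn
  have hc : ((n:ℝ)+1) * ((2*(n+1)).choose (n+1) : ℝ)
      = 2 * (2*(n:ℝ)+1) * ((2*n).choose n : ℝ) := by
    exact_mod_cast Nat.succ_mul_centralBinom_succ n
  rw [Bcoef, Bcoef, ← mul_pow]
  congr 1
  have hne1 : ((n:ℝ)+1) ≠ 0 := by positivity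
  have hne2 : (2*(n:ℝ)+1) ≠ 0 := by positivity
  have hne3 : (2*(n:ℝ)-1) ≠ 0 := by intro h; nlinarith
  have hne4 : ((4:ℝ)^n) ≠ 0 := by positivity
  have hne5 : (2*(n:ℝ)+2) ≠ 0 := by positivity
  have hcast : ((2*(n+1)).choose (n+1) : ℝ)
      = 2 * (2*(n:ℝ)+1) * ((2*n).choose n : ℝ) / ((n:ℝ)+1) := by
    field_simp
    linarith [hc]
  push_cast [hcast]
  rw [pow_succ, show 2*((n:ℝ)+1)-1 = 2*(n:ℝ)+1 by ring]
  exact Bsucc_aux n _ h0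

lemma final_bound (m : ℕ) : (623/324) * e (m+4) < 32 * Bcoef (m+5) := by
  induction m with
  | zero =>
    have hch : Nat.choose 10 5 = 252 := by decide
    have h4 : e (0+4) = 405/32768 := e4
    rw [h4]
    norm_num [Bcoef, hch]
  | succ m IH =>
    simp only [show m+1+4 = m+4+1 from by omega, show m+1+5 = m+5+1 from by omega]
    have hB := B_succ (m+5) (by omega)
    have hBp : 0 < Bcoef (m+5) := B_pos (m+5) (by omega)
    have hm : (0:ℝ) ≤ (m:ℝ) := Nat.cast_nonneg m
    have hnum : (0:ℝ) < 3 * (2*((m:ℝ)+4) - 1) := by linarith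
    have hden : (0:ℝ) < 8 * (((m:ℝ)+4)+1) := by linarith
    have hratio : (3 * (2*((m:ℝ)+4) - 1)) / (8 * (((m:ℝ)+4)+1))
        ≤ ((2*((m+5:ℕ):ℝ) - 1) / (2*((m+5:ℕ):ℝ) + 2))^2 := by
      push_cast
      rw [div_pow, div_le_div_iff₀ hden (by positivity)]
      nlinarith [sq_nonneg ((m:ℝ)), hm]
    calc (623/324) * e (m+4+1)
        = ((623/324) * e (m+4)) * ((3 * (2*((m:ℝ)+4) - 1)) / (8 * (((m:ℝ)+4)+1))) := by
          rw [e_succ (m+4)]; push_cast; ring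
      _ < (32 * Bcoef (m+5)) * ((3 * (2*((m:ℝ)+4) - 1)) / (8 * (((m:ℝ)+4)+1))) := by
          exact mul_lt_mul_of_pos_right IH (by positivity)
      _ ≤ (32 * Bcoef (m+5)) * (((2*((m+5:ℕ):ℝ) - 1) / (2*((m+5:ℕ):ℝ) + 2))^2) := by
          exact mul_le_mul_of_nonneg_left hratio (by positivity)
      _ = 32 * Bcoef (m+5+1) := by rw [hB]; ring

end CoefAux

theorem coefficients_strict_inequality (n : ℕ) (hn : 5 ≤ n) : Acoef n < Bcoef n := by
  obtain ⟨m, rfl⟩ : ∃ m, n = m + 5 := ⟨n - 5, by omega⟩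
  have h1 := (CoefAux.sandwich (m+1)).2
  have h2 := CoefAux.final_bound m
  simp only [show m+1+4 = m+5 from by omega, show m+1+3 = m+4 from by omega] at h1
  linarith
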